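/- Let G(s) be a proper real rational matrix (each entry has numerator degree at most denominator degree) and let U(s) = Σ_{i=0}^{k} u_i s^i be a vector polynomial with u_k ≠ 0. If G(s)U(s) is strictly proper, then G(s)·Ũ(s) is strictly proper, where Ũ(s) = Σ_{i=1}^{k} u_i s^{i-1}. -/

import Mathlib

open Matrix Polynomial

/-- A rational function is strictly proper if its numerator degree is
strictly less than its denominator degree. -/
def StrictlyProper (r : RatFunc ℝ) : Prop := r.num.degree < r.denom.degree

/-- A rational function is proper if its numerator degree is at most its denominator degree. -/
def ProperRF (r : RatFunc ℝ) : Prop := r.num.degree ≤ r.denom.degree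

lemma sp_iff (r : RatFunc ℝ) : StrictlyProper r ↔ r = 0 ∨ r.intDegree < 0 := by
  rcases eq_or_ne r 0 with h | h
  · simp [h, StrictlyProper]
  · have hn : r.num ≠ 0 := RatFunc.num_ne_zero h
    have hd : r.denom ≠ 0 := r.denom_ne_zero
    unfold StrictlyProper RatFunc.intDegree
    rw [← Polynomial.natDegree_lt_natDegree_iff hn]
    simp only [h, false_or]
    omega

lemma pr_iff (r : RatFunc ℝ) : ProperRF r ↔ r = 0 ∨ r.intDegree ≤ 0 := by
  rcases eq_or_ne r 0 with h | h
  · simp [h, ProperRF]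
  · have hn : r.num ≠ 0 := RatFunc.num_ne_zero h
    have hd : r.denom ≠ 0 := r.denom_ne_zero
    unfold ProperRF
    rw [Polynomial.degree_eq_natDegree hn, Polynomial.degree_eq_natDegree hd,
      Nat.cast_le]
    unfold RatFunc.intDegree
    simp only [h, false_or]
    omega

lemma pr_of_sp {r : RatFunc ℝ} (h : StrictlyProper r) : ProperRF r := by
  rw [sp_iff] at h; rw [pr_iff]
  rcases h with h | h
  · exact Or.inl h
  · exact Or.inr h.le

lemma pr_add {a b : RatFunc ℝ} (ha : ProperRF a) (hb : ProperRF b) :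
    ProperRF (a + b) := by
  rw [pr_iff] at *
  rcases eq_or_ne (a + b) 0 with h0 | h0
  · exact Or.inl h0
  rcases hb with hb | hb
  · simp only [hb, add_zero] at h0 ⊢
    exact ha
  rcases ha with ha | ha
  · simp only [ha, zero_add] at h0 ⊢
    exact Or.inr hb
  rcases eq_or_ne b 0 with hb0 | hb0
  · simp only [hb0, add_zero] at h0 ⊢
    exact Or.inr ha
  right
  calc (a + b).intDegree ≤ max a.intDegree b.intDegree :=
        RatFunc.intDegree_add_le hb0 h0
    _ ≤ 0 := max_le ha hb

lemma pr_neg {a : RatFunc ℝ} (ha : ProperRF a) : ProperRF (-a) := by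
  rw [pr_iff] at *
  rcases ha with h | h
  · simp [h]
  · right; rwa [RatFunc.intDegree_neg]

lemma pr_mul_C {a : RatFunc ℝ} (ha : ProperRF a) (c : ℝ) :
    ProperRF (a * algebraMap (Polynomial ℝ) (RatFunc ℝ) (Polynomial.C c)) := by
  rcases eq_or_ne c 0 with hc | hc
  · simp [hc, pr_iff]
  rcases eq_or_ne a 0 with h0 | h0
  · simp [h0, pr_iff]
  rw [pr_iff] at *
  right
  have hcne : algebraMap (Polynomial ℝ) (RatFunc ℝ) (Polynomial.C c) ≠ 0 := by
    simp [hc, FaithfulSMul.algebraMap_eq_zero_iff]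
  rw [RatFunc.intDegree_mul h0 hcne, RatFunc.intDegree_polynomial]
  simp only [Polynomial.natDegree_C, Nat.cast_zero, add_zero]
  rcases ha with ha | ha
  · exact absurd ha h0
  · exact ha

lemma sp_div_X {a : RatFunc ℝ} (ha : ProperRF a) :
    StrictlyProper (a * (RatFunc.X)⁻¹) := by
  rcases eq_or_ne a 0 with h0 | h0
  · simp [h0, sp_iff]
  rw [sp_iff]
  right
  have hX : (RatFunc.X : RatFunc ℝ) ≠ 0 := RatFunc.X_ne_zero
  have hXi : (RatFunc.X : RatFunc ℝ)⁻¹ ≠ 0 := inv_ne_zero hX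
  have hinv : (RatFunc.X : RatFunc ℝ)⁻¹.intDegree = -1 := by
    have := RatFunc.intDegree_mul hX hXi
    rw [mul_inv_cancel₀ hX, RatFunc.intDegree_one, RatFunc.intDegree_X] at this
    omega
  rw [RatFunc.intDegree_mul h0 hXi, hinv]
  rw [pr_iff] at ha
  rcases ha with ha | ha
  · exact absurd ha h0
  · omega

/-- If `G(s)` is proper and `G(s)U(s)` is strictly proper with
`U(s) = Σ_{i=0}^k u_i s^i`, `u_k ≠ 0`, then `G(s)Ũ(s)` is strictly proper,
where `Ũ(s) = Σ_{i=1}^k u_i s^{i-1}`. -/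
theorem strictly_proper_shift {p m k : ℕ} (G : Matrix (Fin p) (Fin m) (RatFunc ℝ))
    (hG : ∀ i j, ProperRF (G i j)) (u : Fin (k + 1) → Fin m → ℝ)
    (hu : u (Fin.last k) ≠ 0)
    (hGU : ∀ i, StrictlyProper
      ((G.mulVec fun j => algebraMap (Polynomial ℝ) (RatFunc ℝ)
        (∑ l : Fin (k + 1), Polynomial.C (u l j) * Polynomial.X ^ (l : ℕ))) i)) :
    ∀ i, StrictlyProper
      ((G.mulVec fun j => algebraMap (Polynomial ℝ) (RatFunc ℝ)
        (∑ l : Fin k, Polynomial.C (u l.succ j) * Polynomial.X ^ (l : ℕ))) i) := by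
  intro i
  set F : Fin m → RatFunc ℝ := fun j => algebraMap (Polynomial ℝ) (RatFunc ℝ)
    (∑ l : Fin (k + 1), Polynomial.C (u l j) * Polynomial.X ^ (l : ℕ)) with hF
  set T : Fin m → RatFunc ℝ := fun j => algebraMap (Polynomial ℝ) (RatFunc ℝ)
    (∑ l : Fin k, Polynomial.C (u l.succ j) * Polynomial.X ^ (l : ℕ)) with hT
  set c : Fin m → RatFunc ℝ := fun j => algebraMap (Polynomial ℝ) (RatFunc ℝ)
    (Polynomial.C (u 0 j)) with hc
  -- key polynomial identity: F j = X * T j + c j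
  have hkey : ∀ j, F j = RatFunc.X * T j + c j := by
    intro j
    rw [hF, hT, hc]
    simp only
    rw [← RatFunc.algebraMap_X, ← _root_.map_mul, ← _root_.map_add]
    congr 1
    rw [Fin.sum_univ_succ, Finset.mul_sum, add_comm]
    simp only [Fin.val_zero, pow_zero, mul_one, Fin.val_succ]
    congr 1
    exact Finset.sum_congr rfl fun l _ => by rw [pow_succ]; ring
  -- mulVec identity
  have hmv : G.mulVec T i = (G.mulVec F i + -(G.mulVec c i)) * (RatFunc.X)⁻¹ := by
    have hXne : (RatFunc.X : RatFunc ℝ) ≠ 0 := RatFunc.X_ne_zero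
    have : G.mulVec F i = RatFunc.X * G.mulVec T i + G.mulVec c i := by
      simp only [Matrix.mulVec, dotProduct]
      rw [Finset.mul_sum, ← Finset.sum_add_distrib]
      apply Finset.sum_congr rfl
      intro j _
      rw [hkey j]
      ring
    rw [this, add_neg_cancel_right, mul_comm RatFunc.X, mul_assoc,
      mul_inv_cancel₀ hXne, mul_one]
  rw [hmv]
  apply sp_div_X
  apply pr_add
  · exact pr_of_sp (hGU i)
  · apply pr_neg
    simp only [Matrix.mulVec, dotProduct]
    apply Finset.sum_induction _ ProperRF (fun a b => pr_add) (by simp [pr_iff])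
    intro j _
    exact pr_mul_C (hG i j) (u 0 j)
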